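/- Let V be a finite set, L a co-simplicial complex on V, and ω = Σ_{v∈V} f(v) dv for a function f : V → ℝ. Then ω maps the span of n-co-simplices of L into the span of (n+1)-co-simplices of L modulo cyclic paths; i.e., for any n-co-simplex v₀…v_n of L, ω(v₀…v_n) is, after discarding all elementary paths with repeated vertices, a linear combination of (n+1)-co-simplices of L. Consequently (C_n(L;ℝ), ω) is a cochain complex with ω² = 0. -/

import Mathlib

/- The real vector space `Λ(V)` of paths on `V`: formal linear combinations of
elementary paths (finite sequences of vertices, repetitions allowed), modelled
as finitely supported functions `List V →₀ ℝ`.  The elementary `n`-paths are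
the lists of length `n + 1`. -/

variable {V : Type*} [DecidableEq V]

/-- The partial derivative `∂/∂v`, defined on an elementary path
`v₀v₁…v_n` by `Σᵢ (-1)^i δ(v, vᵢ) v₀…v̂ᵢ…v_n`. -/
noncomputable def pDeriv (v : V) : (List V →₀ ℝ) →ₗ[ℝ] (List V →₀ ℝ) :=
  Finsupp.lsum ℝ fun l => LinearMap.toSpanSingleton ℝ _
    (∑ i : Fin l.length, (if l.get i = v then ((-1 : ℝ) ^ (i : ℕ)) else 0) •
      Finsupp.single (l.eraseIdx (i : ℕ)) (1 : ℝ))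

/-- The insertion operator `dv`, defined on an elementary path
`u₀u₁…u_{n-1}` by `Σᵢ (-1)^i u₀…u_{i-1} v uᵢ…u_{n-1}`. -/
noncomputable def pIns (v : V) : (List V →₀ ℝ) →ₗ[ℝ] (List V →₀ ℝ) :=
  Finsupp.lsum ℝ fun l => LinearMap.toSpanSingleton ℝ _
    (∑ i : Fin (l.length + 1), ((-1 : ℝ) ^ (i : ℕ)) •
      Finsupp.single (l.insertIdx (i : ℕ) v) (1 : ℝ))

/-- The canonical inner product on the path space, making the elementary
paths an orthonormal basis. -/
noncomputable def pInner (f g : List V →₀ ℝ) : ℝ :=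
  f.sum fun l a => a * g l
/-- The projection of the path space onto the span of the paths without
repeated vertices, discarding all cyclic elementary paths. -/
noncomputable def projNodup : (List V →₀ ℝ) →ₗ[ℝ] (List V →₀ ℝ) :=
  Finsupp.lsum ℝ fun l => LinearMap.toSpanSingleton ℝ _
    (if l.Nodup then Finsupp.single l (1 : ℝ) else 0)

set_option linter.unusedSectionVars false
set_option linter.unusedVariables false

lemma pIns_single (v : V) (l : List V) :
    pIns v (Finsupp.single l 1) =
      ∑ i ∈ Finset.range (l.length + 1),
        ((-1 : ℝ) ^ i) • Finsupp.single (l.insertIdx i v) (1 : ℝ) := by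
  rw [pIns, Finsupp.lsum_single, LinearMap.toSpanSingleton_apply_one]
  exact Fin.sum_univ_eq_sum_range
    (fun i => ((-1:ℝ)^i) • Finsupp.single (l.insertIdx i v) (1:ℝ)) _

lemma pIns_pIns (v w : V) (l : List V) :
    pIns v (pIns w (Finsupp.single l 1)) =
      ∑ p ∈ Finset.range (l.length + 2) ×ˢ Finset.range (l.length + 1),
        ((-1 : ℝ) ^ (p.1 + p.2)) •
          Finsupp.single ((l.insertIdx p.2 w).insertIdx p.1 v) (1 : ℝ) := by
  rw [pIns_single, map_sum, Finset.sum_product_right]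
  refine Finset.sum_congr rfl fun j hj => ?_
  have hjlen : (l.insertIdx j w).length = l.length + 1 :=
    List.length_insertIdx_of_le_length (by simpa using Nat.lt_succ_iff.mp (Finset.mem_range.mp hj)) _
  rw [map_smul, pIns_single, hjlen, Finset.smul_sum]
  refine Finset.sum_congr rfl fun i _ => ?_
  rw [smul_smul, pow_add, mul_comm]

lemma pIns_anticomm (v w : V) (l : List V) :
    pIns v (pIns w (Finsupp.single l 1)) + pIns w (pIns v (Finsupp.single l 1)) = 0 := by
  rw [pIns_pIns, pIns_pIns, add_eq_zero_iff_eq_neg, ← Finset.sum_neg_distrib]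
  refine Finset.sum_nbij'
    (i := fun p => if p.1 ≤ p.2 then (p.2 + 1, p.1) else (p.2, p.1 - 1))
    (j := fun p => if p.1 ≤ p.2 then (p.2 + 1, p.1) else (p.2, p.1 - 1))
    ?_ ?_ ?_ ?_ ?_
  · intro p hp
    simp only [Finset.mem_product, Finset.mem_range] at hp ⊢
    split_ifs <;> omega
  · intro p hp
    simp only [Finset.mem_product, Finset.mem_range] at hp ⊢
    split_ifs <;> omega
  · intro p hp
    simp only [Finset.mem_product, Finset.mem_range] at hp
    rcases le_or_gt p.1 p.2 with h | h
    · simp only [if_pos h]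
      rw [if_neg (by omega)]
      simp [Prod.ext_iff]
    · simp only [if_neg (not_le.mpr h)]
      rw [if_pos (by omega)]
      simp [Prod.ext_iff]
      omega
  · intro p hp
    simp only [Finset.mem_product, Finset.mem_range] at hp
    rcases le_or_gt p.1 p.2 with h | h
    · simp only [if_pos h]
      rw [if_neg (by omega)]
      simp [Prod.ext_iff]
    · simp only [if_neg (not_le.mpr h)]
      rw [if_pos (by omega)]
      simp [Prod.ext_iff]
      omega
  · rintro ⟨i, j⟩ hp
    simp only [Finset.mem_product, Finset.mem_range] at hp
    rcases le_or_gt i j with h | h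
    · simp only [if_pos h]
      rw [List.insertIdx_comm v w (i := i) (j := j) (l := l) h (by omega)]
      rw [← neg_smul]
      congr 1
      ring_nf
    · obtain ⟨k, rfl⟩ : ∃ k, i = k + 1 := ⟨i - 1, by omega⟩
      simp only [if_neg (not_le.mpr h), Nat.add_sub_cancel]
      rw [← List.insertIdx_comm w v (i := j) (j := k) (l := l) (by omega) (by omega)]
      rw [← neg_smul]
      congr 1
      rw [pow_add, pow_add, pow_succ]
      ring

lemma pIns_comp_anticomm (v w : V) :
    pIns v ∘ₗ pIns w + pIns w ∘ₗ pIns v = 0 := by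
  apply Finsupp.lhom_ext
  intro l b
  have hb : (Finsupp.single l b : List V →₀ ℝ) = b • Finsupp.single l 1 := by
    rw [Finsupp.smul_single, smul_eq_mul, mul_one]
  simp only [LinearMap.add_apply, LinearMap.comp_apply, LinearMap.zero_apply, hb,
    map_smul]
  rw [pIns_anticomm]

lemma projNodup_single (m : List V) :
    projNodup (Finsupp.single m (1 : ℝ)) =
      if m.Nodup then Finsupp.single m (1 : ℝ) else 0 := by
  rw [projNodup, Finsupp.lsum_single, LinearMap.toSpanSingleton_apply_one]


/-- Let `V` be a finite linearly ordered set, `L` a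
co-simplicial complex on `V` (closed under supersets), `f : V → ℝ`, and
`ω = Σ_{v ∈ V} f(v) dv`.  Then for any co-simplex of `L` (encoded by its
strictly increasing vertex list `l`), `ω(l)`, after discarding all elementary
paths with repeated vertices, is a linear combination of elementary paths
representing co-simplices of `L` (paths without repetition whose vertex set
belongs to `L`); and `ω ∘ ω = 0`, so `(C_n(L;ℝ), ω)` is a cochain complex. -/
theorem weighted_coboundary_cosimplicial
    {V : Type*} [Fintype V] [LinearOrder V] (L : Set (Finset V))
    (hL_ne : ∀ σ ∈ L, Finset.Nonempty σ)
    (hL : ∀ σ ∈ L, ∀ τ : Finset V, σ ⊆ τ → τ ∈ L)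
    (f : V → ℝ) :
    (∀ l : List V, l.Chain' (· < ·) → l.toFinset ∈ L →
        projNodup ((∑ v : V, f v • pIns v) (Finsupp.single l 1)) ∈
          Submodule.span ℝ
            {x : List V →₀ ℝ |
              ∃ m : List V, m.Nodup ∧ m.toFinset ∈ L ∧
                x = Finsupp.single m 1}) ∧
    ((∑ v : V, f v • pIns v) ∘ₗ (∑ v : V, f v • pIns v) = 0) := by
  constructor
  · intro l _ hlL
    simp only [LinearMap.sum_apply, LinearMap.smul_apply, map_sum, map_smul]
    refine Submodule.sum_mem _ fun v _ => Submodule.smul_mem _ _ ?_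
    rw [pIns_single, map_sum]
    refine Submodule.sum_mem _ fun i hi => ?_
    rw [map_smul, projNodup_single]
    split_ifs with h
    · refine Submodule.smul_mem _ _ (Submodule.subset_span ?_)
      refine ⟨_, h, ?_, rfl⟩
      refine hL _ hlL _ ?_
      intro x hx
      rw [List.mem_toFinset] at hx
      rw [List.mem_toFinset,
        List.mem_insertIdx (by simpa using Nat.lt_succ_iff.mp (Finset.mem_range.mp hi))]
      exact Or.inr hx
    · rw [smul_zero]
      exact Submodule.zero_mem _
  · apply Finsupp.lhom_ext
    intro l b
    have hb : (Finsupp.single l b : List V →₀ ℝ) = b • Finsupp.single l 1 := by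
      rw [Finsupp.smul_single, smul_eq_mul, mul_one]
    rw [LinearMap.comp_apply, LinearMap.zero_apply, hb, map_smul, map_smul]
    have h2 : (∑ v : V, ∑ w : V, (f v * f w) • pIns v (pIns w (Finsupp.single l 1)))
        = ∑ v : V, ∑ w : V, (f v * f w) • pIns w (pIns v (Finsupp.single l 1)) := by
      rw [Finset.sum_comm]
      exact Finset.sum_congr rfl fun v _ => Finset.sum_congr rfl fun w _ => by
        rw [mul_comm]
    have h3 : (∑ v : V, ∑ w : V, (f v * f w) • pIns v (pIns w (Finsupp.single l 1)))
        + (∑ v : V, ∑ w : V, (f v * f w) • pIns v (pIns w (Finsupp.single l 1))) = 0 := by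
      nth_rewrite 2 [h2]
      rw [← Finset.sum_add_distrib]
      refine Finset.sum_eq_zero fun v _ => ?_
      rw [← Finset.sum_add_distrib]
      refine Finset.sum_eq_zero fun w _ => ?_
      rw [← smul_add, pIns_anticomm, smul_zero]
    have key : (∑ v : V, ∑ w : V, (f v * f w) • pIns v (pIns w (Finsupp.single l 1))) = 0 := by
      have h4 : (2 : ℝ) • (∑ v : V, ∑ w : V,
          (f v * f w) • pIns v (pIns w (Finsupp.single l 1))) = 0 := by
        rw [two_smul]; exact h3
      exact (smul_eq_zero.mp h4).resolve_left (by norm_num)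
    have hSS : (∑ v : V, f v • pIns v) ((∑ v : V, f v • pIns v) (Finsupp.single l 1))
        = ∑ v : V, ∑ w : V, (f v * f w) • pIns v (pIns w (Finsupp.single l 1)) := by
      simp only [LinearMap.sum_apply, LinearMap.smul_apply, map_sum, map_smul,
        Finset.smul_sum, smul_smul]
      rw [Finset.sum_comm]
      exact Finset.sum_congr rfl fun v _ => Finset.sum_congr rfl fun w _ => by
        rw [mul_comm]
    rw [hSS, key, smul_zero]
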